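/- Let [a,b] be a proper interval in S^d (i.e., no element strictly between a and b has length equal to l(a) or l(b)) with l(a) = l(b). Then [a,b] contains an odd number of flat steps, where a step [c, s(c)] (for a ⪯ c ≺ b) is flat if l(c) = l(s(c)). -/

import Mathlib

open SimpleGraph

/-- Sorted list of the tuple set `S^d`: tuples with entries in {1,3} except
the last entry which is in {1,2,3,4}, of length between 1 and `d`,
listed in lexicographic order. -/
def Tl : ℕ → List (List ℕ)
  | 0 => []
  | k+1 => [[1]] ++ (Tl k).map (fun a => 1 :: a) ++ [[2], [3]]
            ++ (Tl k).map (fun a => 3 :: a) ++ [[4]]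

/-- Strict lexicographic order on tuples (a proper prefix is smaller). -/
def lexLt (a b : List ℕ) : Prop := List.Lex (· < ·) a b

def lexLe (a b : List ℕ) : Prop := a = b ∨ lexLt a b

/-- `v` is the successor of `u` in the lexicographic order on `S^d`. -/
def IsSucc (d : ℕ) (u v : List ℕ) : Prop :=
  v ∈ Tl d ∧ lexLt u v ∧ ∀ w ∈ Tl d, lexLt u w → lexLe v w

/-- The interval `[a,b]` in `S^d`. -/
def interval (d : ℕ) (a b : List ℕ) : Set (List ℕ) :=
  {c | c ∈ Tl d ∧ lexLe a c ∧ lexLe c b}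

/-- `[a,b]` is a proper interval: no interior element has length `l(a)` or `l(b)`. -/
def ProperInterval (d : ℕ) (a b : List ℕ) : Prop :=
  a ∈ Tl d ∧ b ∈ Tl d ∧ lexLe a b ∧
  ∀ c ∈ interval d a b, c ≠ a → c ≠ b →
    c.length ≠ a.length ∧ c.length ≠ b.length

/-- The set of left endpoints of flat steps of the interval `[a,b]`. -/
def flatSteps (d : ℕ) (a b : List ℕ) : Set (List ℕ) :=
  {c | c ∈ Tl d ∧ lexLe a c ∧ lexLt c b ∧ ∃ v, IsSucc d c v ∧ v.length = c.length}

/-- Vertices of `G_d`: elements of `S^d`, subdivision vertices, and centers. -/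
inductive Vtx where
  | elt : List ℕ → Vtx
  | sub : ℕ → Fin 2 → Vtx
  | ctr : ℕ → Vtx
deriving DecidableEq

/-- The path `P_d` as a list of vertices: the elements of `S^d` in order,
with two subdivision vertices between consecutive elements of equal length
and one otherwise. -/
def pathList (d : ℕ) : List Vtx :=
  (((Tl d).zipIdx).map (fun q => (q.2, q.1))).flatMap (fun p =>
    Vtx.elt p.2 :: (match (Tl d)[p.1 + 1]? with
      | none => []
      | some b =>
        if p.2.length = b.length then [Vtx.sub p.1 0, Vtx.sub p.1 1]
        else [Vtx.sub p.1 0]))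

/-- `x` and `y` are consecutive in the list `l`. -/
def ChainAdj {α : Type} (l : List α) (x y : α) : Prop :=
  ∃ i, (l[i]? = some x ∧ l[i+1]? = some y) ∨
       (l[i]? = some y ∧ l[i+1]? = some x)

/-- Adjacency from a center vertex. -/
def ctrAdj (d : ℕ) : Vtx → Vtx → Prop
  | Vtx.ctr k, Vtx.ctr m => k ≠ m ∧ 1 ≤ k ∧ k ≤ d ∧ 1 ≤ m ∧ m ≤ d
  | Vtx.ctr k, Vtx.elt a => 1 ≤ k ∧ k ≤ d ∧ a ∈ Tl d ∧ a.length = k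
  | _, _ => False

/-- The vertex set of `G_d`. -/
def VSet (d : ℕ) : Finset Vtx :=
  (pathList d).toFinset ∪ (Finset.Icc 1 d).image Vtx.ctr

def GdAdj (d : ℕ) (x y : Vtx) : Prop :=
  x ≠ y ∧ (ChainAdj (pathList d) x y ∨ ctrAdj d x y ∨ ctrAdj d y x)

/-- The graph `G_d`. -/
def Gd (d : ℕ) : SimpleGraph {x // x ∈ VSet d} where
  Adj x y := GdAdj d x.1 y.1
  symm := ⟨by
    rintro x y ⟨hne, h⟩
    refine ⟨hne.symm, ?_⟩
    rcases h with ⟨i, hi⟩ | h | h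
    · exact Or.inl ⟨i, hi.symm⟩
    · exact Or.inr (Or.inr h)
    · exact Or.inr (Or.inl h)⟩
  loopless := ⟨fun x h => h.1 rfl⟩

/-- A rank decomposition of a graph `G`: a finite cubic tree together with a
bijection from the vertices of `G` to the leaves of the tree. -/
structure RankDecomp {V : Type} [Fintype V] (G : SimpleGraph V) where
  t : Type
  fin : Fintype t
  tree : SimpleGraph t
  conn : tree.Connected
  acyc : tree.IsAcyclic
  two_le : 2 ≤ Nat.card t
  cubic : ∀ v : t, (tree.neighborSet v).ncard = 1 ∨ (tree.neighborSet v).ncard = 3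
  leafEquiv : V ≃ {v : t // (tree.neighborSet v).ncard = 1}

/-- The set of vertices of `G` whose leaf lies on the side of `a` of
the edge `ab` of the decomposition tree. -/
def RankDecomp.side {V : Type} [Fintype V] {G : SimpleGraph V}
    (D : RankDecomp G) (a b : D.t) : Set V :=
  {x | (D.tree.deleteEdges {s(a, b)}).Reachable (D.leafEquiv x).1 a}

/-- The cutrank function of `G`: the GF(2)-rank of the adjacency submatrix
between `X` and its complement. -/
noncomputable def cutRank {V : Type} [Fintype V] (G : SimpleGraph V) (X : Set V) : ℕ :=
  haveI : Fintype ↥X := Fintype.ofFinite _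
  haveI : Fintype ↥(Xᶜ) := Fintype.ofFinite _
  haveI : DecidableRel G.Adj := Classical.decRel _
  Matrix.rank (Matrix.of (fun (x : ↥X) (y : ↥(Xᶜ)) =>
    if G.Adj x.1 y.1 then (1 : ZMod 2) else 0))

/-- The decomposition `D` has width at most `k`. -/
def RankDecomp.WidthLE {V : Type} [Fintype V] {G : SimpleGraph V}
    (D : RankDecomp G) (k : ℕ) : Prop :=
  ∀ a b : D.t, D.tree.Adj a b → cutRank G (D.side a b) ≤ k

/-- The rank-width of `G`. -/
noncomputable def rankwidth {V : Type} [Fintype V] (G : SimpleGraph V) : ℕ :=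
  sInf {k | ∃ D : RankDecomp G, D.WidthLE k}

/-- `l` is an induced path in `G`: its vertices are distinct and two of them
are adjacent in `G` iff they are consecutive on `l`. -/
def IsInducedPathList {V : Type} (G : SimpleGraph V) (l : List V) : Prop :=
  l.Nodup ∧ ∀ x ∈ l, ∀ y ∈ l, (G.Adj x y ↔ ChainAdj l x y)

/-- The diamond: the complete graph on four vertices minus an edge. -/
def diamond : SimpleGraph (Fin 4) := (⊤ : SimpleGraph (Fin 4)).deleteEdges {s(2, 3)}

def lastE (x : List ℕ) : ℕ := x.getLastD 0

lemma lastE_cons {x : List ℕ} (hx : x ≠ []) (k : ℕ) : lastE (k :: x) = lastE x := by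
  cases x with
  | nil => exact absurd rfl hx
  | cons a t => simp [lastE, List.getLastD_eq_getLast?, List.getLast?_cons_cons]

def StepR (x y : List ℕ) : Prop :=
  x ≠ [] ∧ y ≠ [] ∧
    ((y.length = x.length + 1 ∧ lastE y = 1 ∧ lastE x % 2 = 1) ∨
     (y.length = x.length ∧ lastE y = lastE x + 1) ∨
     (x.length = y.length + 1 ∧ lastE x = 4 ∧ lastE y % 2 = 0))

lemma StepR_cons {x y : List ℕ} (h : StepR x y) (k : ℕ) : StepR (k :: x) (k :: y) := by
  obtain ⟨hx, hy, h⟩ := h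
  refine ⟨by simp, by simp, ?_⟩
  rw [lastE_cons hx, lastE_cons hy]
  simp only [List.length_cons]
  rcases h with ⟨h1,h2,h3⟩|⟨h1,h2⟩|⟨h1,h2,h3⟩
  · exact Or.inl ⟨by omega, h2, h3⟩
  · exact Or.inr (Or.inl ⟨by omega, h2⟩)
  · exact Or.inr (Or.inr ⟨by omega, h2, h3⟩)

lemma Tl_ne_nil : ∀ d, ∀ x ∈ Tl d, x ≠ [] := by
  intro d
  induction d with
  | zero => simp [Tl]
  | succ d ih =>
    intro x hx
    simp only [Tl, List.mem_append, List.mem_map, List.mem_cons, List.mem_singleton] at hx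
    rcases hx with ((((h|h)|⟨a,_,rfl⟩)|h|h)|⟨a,_,rfl⟩)|h <;> simp_all

lemma Tl_head (d : ℕ) : (Tl (d+1)).head? = some [1] := rfl

lemma Tl_last (d : ℕ) : (Tl (d+1)).getLast? = some [4] := List.getLast?_concat

lemma chain_StepR : ∀ d, List.IsChain StepR (Tl d) := by
  intro d
  induction d with
  | zero => simp [Tl]
  | succ d ih =>
    have h1 : List.IsChain StepR ((Tl d).map (fun a => 1 :: a)) :=
      List.isChain_map_of_isChain (fun a => 1 :: a) (fun a b h => StepR_cons h 1) ih
    have h3 : List.IsChain StepR ((Tl d).map (fun a => 3 :: a)) :=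
      List.isChain_map_of_isChain (fun a => 3 :: a) (fun a b h => StepR_cons h 3) ih
    cases d with
    | zero =>
      show List.IsChain StepR [[1],[2],[3],[4]]
      refine List.isChain_cons_cons.mpr ⟨?_, List.isChain_cons_cons.mpr ⟨?_, List.isChain_cons_cons.mpr
        ⟨?_, List.isChain_singleton _⟩⟩⟩ <;> simp [StepR, lastE]
    | succ e =>
      show List.IsChain StepR ([[1]] ++ (Tl (e+1)).map (fun a => 1 :: a) ++ [[2], [3]]
        ++ (Tl (e+1)).map (fun a => 3 :: a) ++ [[4]])
      simp only [List.isChain_append, List.head?_append, List.getLast?_append,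
        List.head?_map, List.getLast?_map, Tl_head, Tl_last]
      refine ⟨⟨⟨⟨List.isChain_singleton _, h1, ?_⟩, ?_, ?_⟩, h3, ?_⟩, ?_, ?_⟩ <;>
        simp [StepR, lastE, Option.or]

lemma lexLt_cons {x y : List ℕ} (h : lexLt x y) (k : ℕ) : lexLt (k :: x) (k :: y) :=
  List.Lex.cons h

lemma chain_lt : ∀ d, List.IsChain lexLt (Tl d) := by
  intro d
  induction d with
  | zero => simp [Tl]
  | succ d ih =>
    have h1 : List.IsChain lexLt ((Tl d).map (fun a => 1 :: a)) :=
      List.isChain_map_of_isChain (fun a => 1 :: a) (fun a b h => lexLt_cons h 1) ih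
    have h3 : List.IsChain lexLt ((Tl d).map (fun a => 3 :: a)) :=
      List.isChain_map_of_isChain (fun a => 3 :: a) (fun a b h => lexLt_cons h 3) ih
    cases d with
    | zero =>
      show List.IsChain lexLt [[1],[2],[3],[4]]
      refine List.isChain_cons_cons.mpr ⟨?_, List.isChain_cons_cons.mpr ⟨?_, List.isChain_cons_cons.mpr
        ⟨?_, List.isChain_singleton _⟩⟩⟩ <;> (unfold lexLt; decide)
    | succ e =>
      show List.IsChain lexLt ([[1]] ++ (Tl (e+1)).map (fun a => 1 :: a) ++ [[2], [3]]
        ++ (Tl (e+1)).map (fun a => 3 :: a) ++ [[4]])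
      simp only [List.isChain_append, List.head?_append, List.getLast?_append,
        List.head?_map, List.getLast?_map, Tl_head, Tl_last]
      refine ⟨⟨⟨⟨List.isChain_singleton _, h1, ?_⟩, ?_, ?_⟩, h3, ?_⟩, ?_, ?_⟩ <;>
        simp [Option.or] <;> (unfold lexLt; decide)

lemma lexLt_trans {a b c : List ℕ} (h1 : lexLt a b) (h2 : lexLt b c) : lexLt a c :=
  List.lex_trans (fun h1 h2 => Nat.lt_trans h1 h2) h1 h2

lemma lexLt_irrefl (a : List ℕ) : ¬ lexLt a a := irrefl_of (List.Lex (· < · : ℕ → ℕ → Prop)) a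

lemma lexLt_asymm {a b : List ℕ} (h : lexLt a b) : ¬ lexLt b a :=
  asymm_of (List.Lex (· < · : ℕ → ℕ → Prop)) h

lemma pairwise_lt (d : ℕ) : List.Pairwise lexLt (Tl d) := by
  haveI : Trans lexLt lexLt lexLt := ⟨lexLt_trans⟩
  have := List.isChain_iff_pairwise (R := lexLt) (l := Tl d)
  exact this.mp (chain_lt d)

def el (d i : ℕ) : List ℕ := (Tl d).getD i []

lemma el_get {d i : ℕ} (h : i < (Tl d).length) : el d i = (Tl d).get ⟨i, h⟩ := by
  simp [el, List.getD_eq_getElem?_getD, List.getElem?_eq_getElem h]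

lemma el_mem {d i : ℕ} (h : i < (Tl d).length) : el d i ∈ Tl d := by
  rw [el_get h]; exact List.get_mem _ _

lemma el_lt {d i j : ℕ} (hij : i < j) (hj : j < (Tl d).length) :
    lexLt (el d i) (el d j) := by
  rw [el_get (lt_trans hij hj), el_get hj]
  exact List.pairwise_iff_get.mp (pairwise_lt d) ⟨i, _⟩ ⟨j, _⟩ hij

lemma el_le {d i j : ℕ} (hij : i ≤ j) (hj : j < (Tl d).length) :
    lexLe (el d i) (el d j) := by
  rcases eq_or_lt_of_le hij with rfl | h
  · exact Or.inl rfl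
  · exact Or.inr (el_lt h hj)

lemma el_inj {d i j : ℕ} (hi : i < (Tl d).length) (hj : j < (Tl d).length)
    (h : el d i = el d j) : i = j := by
  rcases lt_trichotomy i j with hl | rfl | hl
  · exact absurd (el_lt hl hj) (h ▸ lexLt_irrefl _)
  · rfl
  · exact absurd (el_lt hl hi) (h ▸ lexLt_irrefl _)

lemma lt_of_el_lt {d i j : ℕ} (hi : i < (Tl d).length) (hj : j < (Tl d).length)
    (h : lexLt (el d i) (el d j)) : i < j := by
  rcases lt_trichotomy i j with hl | rfl | hl
  · exact hl
  · exact absurd h (lexLt_irrefl _)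
  · exact absurd (el_lt hl hi) (lexLt_asymm h)

lemma mem_el {d : ℕ} {x : List ℕ} (h : x ∈ Tl d) : ∃ i, i < (Tl d).length ∧ el d i = x := by
  obtain ⟨⟨i, hi⟩, rfl⟩ := List.mem_iff_get.mp h
  exact ⟨i, hi, el_get hi⟩

lemma isSucc_el {d i : ℕ} (h : i + 1 < (Tl d).length) : IsSucc d (el d i) (el d (i+1)) := by
  refine ⟨el_mem h, el_lt (Nat.lt_succ_self i) h, ?_⟩
  intro w hw hlt
  obtain ⟨j, hj, rfl⟩ := mem_el hw
  have : i < j := lt_of_el_lt (Nat.lt_of_succ_lt h) hj hlt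
  exact el_le this hj

lemma isSucc_unique {d : ℕ} {u v v' : List ℕ} (h : IsSucc d u v) (h' : IsSucc d u v') :
    v = v' := by
  rcases h.2.2 v' h'.1 h'.2.1 with rfl | hlt
  · rfl
  · rcases h'.2.2 v h.1 h.2.1 with rfl | hlt'
    · rfl
    · exact absurd hlt' (lexLt_asymm hlt)

lemma stepR_el {d i : ℕ} (h : i + 1 < (Tl d).length) : StepR (el d i) (el d (i+1)) := by
  rw [el_get (Nat.lt_of_succ_lt h), el_get h]
  exact List.isChain_iff_getElem.mp (chain_StepR d) i (by omega)

lemma endpoint_parity {d ia ib : ℕ} (hab : ia < ib) (hb : ib < (Tl d).length)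
    (hlen : (el d ia).length = (el d ib).length)
    (hint : ∀ i, ia < i → i < ib → (el d i).length ≠ (el d ia).length) :
    (lastE (el d ia) + lastE (el d ib)) % 2 = 1 := by
  set n := (el d ia).length with hn
  by_cases hm : ib = ia + 1
  · subst hm
    rcases stepR_el hb with ⟨_, _, ⟨h1, _, _⟩ | ⟨h1, h2⟩ | ⟨h1, _, _⟩⟩ <;> omega
  · -- interior nonempty
    have hstep : ∀ i, ia ≤ i → i < ib → StepR (el d i) (el d (i+1)) := fun i _ h2 =>
      stepR_el (lt_of_le_of_lt (Nat.succ_le_of_lt h2) hb)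
    have h1lt : ia + 1 < ib := by omega
    obtain ⟨_, _, hfirst⟩ := hstep ia (le_refl _) hab
    have hne1 : (el d (ia+1)).length ≠ n := hint _ (Nat.lt_succ_self _) h1lt
    rcases hfirst with ⟨hU, _, hUa⟩ | ⟨hF, _⟩ | ⟨hD, hDa, _⟩
    · -- up: interior stays above n
      have habove : ∀ i, ia + 1 ≤ i → i < ib → n + 1 ≤ (el d i).length := by
        intro i hi
        induction i, hi using Nat.le_induction with
        | base => intro _; omega
        | succ j hj ihj =>
          intro hjb
          have hj1 : j < ib := by omega
          have hlenj := ihj hj1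
          obtain ⟨_, _, hs⟩ := hstep j (by omega) hj1
          have := hint (j+1) (by omega) hjb
          rcases hs with ⟨h1,_,_⟩ | ⟨h1,_⟩ | ⟨h1,_,_⟩ <;> omega
      obtain ⟨j, rfl⟩ : ∃ j, ib = j + 1 := ⟨ib - 1, by omega⟩
      have hjab : n + 1 ≤ (el d j).length := habove j (by omega) (by omega)
      obtain ⟨_, _, hs⟩ := hstep j (by omega) (by omega)
      rcases hs with ⟨h1,_,_⟩ | ⟨h1,_⟩ | ⟨h1,_,hDb⟩ <;> omega
    · exact absurd (hF.trans hn.symm) hne1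
    · -- down: interior stays below n
      have hbelow : ∀ i, ia + 1 ≤ i → i < ib → (el d i).length < n := by
        intro i hi
        induction i, hi using Nat.le_induction with
        | base => intro _; omega
        | succ j hj ihj =>
          intro hjb
          have hj1 : j < ib := by omega
          have hlenj := ihj hj1
          obtain ⟨_, _, hs⟩ := hstep j (by omega) hj1
          have := hint (j+1) (by omega) hjb
          rcases hs with ⟨h1,_,_⟩ | ⟨h1,_⟩ | ⟨h1,_,_⟩ <;> omega
      obtain ⟨j, rfl⟩ : ∃ j, ib = j + 1 := ⟨ib - 1, by omega⟩
      have hjab : (el d j).length < n := hbelow j (by omega) (by omega)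
      obtain ⟨_, _, hs⟩ := hstep j (by omega) (by omega)
      rcases hs with ⟨h1,hUb,_⟩ | ⟨h1,_⟩ | ⟨h1,_,_⟩ <;> omega

lemma zmod2_add_self (x : ZMod 2) : x + x = 0 := by revert x; decide

lemma cast_mod_eq {a b : ℕ} (h : a % 2 = b % 2) : (a : ZMod 2) = (b : ZMod 2) := by
  rw [← ZMod.natCast_mod a 2, ← ZMod.natCast_mod b 2, h]

lemma cast_of_odd {m : ℕ} (h : m % 2 = 1) : (m : ZMod 2) = 1 := by
  rw [← ZMod.natCast_mod m 2, h]; norm_num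

lemma odd_of_cast {n : ℕ} (h : (n : ZMod 2) = 1) : Odd n := by
  rw [Nat.odd_iff]
  rcases Nat.mod_two_eq_zero_or_one n with h2 | h2
  · rw [← ZMod.natCast_mod n 2, h2] at h
    simp at h
  · exact h2

lemma telescope_add (f : ℕ → ZMod 2) {a b : ℕ} (h : a ≤ b) :
    ∑ i ∈ Finset.Ico a b, (f (i+1) + f i) = f b + f a := by
  induction b, h using Nat.le_induction with
  | base => simp [zmod2_add_self]
  | succ b hb ih =>
    rw [Finset.sum_Ico_succ_top hb, ih]
    have := zmod2_add_self (f b)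
    linear_combination this

def Qn (d i : ℕ) : ℕ := (el d i).length + lastE (el d i)

lemma flat_count {d ia ib : ℕ} (hab : ia < ib) (hb : ib < (Tl d).length)
    (hlen : (el d ia).length = (el d ib).length)
    (hint : ∀ i, ia < i → i < ib → (el d i).length ≠ (el d ia).length) :
    Odd ((Finset.Ico ia ib).filter
      (fun i => (el d (i+1)).length = (el d i).length)).card := by
  apply odd_of_cast
  rw [Finset.card_filter, Nat.cast_sum]
  have key : ∀ i ∈ Finset.Ico ia ib,
      ((if (el d (i+1)).length = (el d i).length then 1 else 0 : ℕ) : ZMod 2)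
      = ((Qn d (i+1) : ℕ) : ZMod 2) + ((Qn d i : ℕ) : ZMod 2)
        + (((el d (i+1)).length : ℕ) : ZMod 2) + (((el d i).length : ℕ) : ZMod 2) := by
    intro i hi
    rw [Finset.mem_Ico] at hi
    obtain ⟨_, _, hs⟩ := stepR_el (d := d) (i := i) (by omega)
    have hmerge : ((Qn d (i+1) : ℕ) : ZMod 2) + ((Qn d i : ℕ) : ZMod 2)
        + (((el d (i+1)).length : ℕ) : ZMod 2) + (((el d i).length : ℕ) : ZMod 2)
        = ((Qn d (i+1) + Qn d i + (el d (i+1)).length + (el d i).length : ℕ) : ZMod 2) := by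
      push_cast; ring
    rw [hmerge]
    apply cast_mod_eq
    unfold Qn
    split_ifs with hf
    · rcases hs with ⟨h1,h2,h3⟩|⟨h1,h2⟩|⟨h1,h2,h3⟩ <;> omega
    · rcases hs with ⟨h1,h2,h3⟩|⟨h1,h2⟩|⟨h1,h2,h3⟩ <;> omega
  rw [Finset.sum_congr rfl key]
  have split : ∑ i ∈ Finset.Ico ia ib,
      (((Qn d (i+1) : ℕ) : ZMod 2) + ((Qn d i : ℕ) : ZMod 2)
        + (((el d (i+1)).length : ℕ) : ZMod 2) + (((el d i).length : ℕ) : ZMod 2))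
      = (∑ i ∈ Finset.Ico ia ib, (((Qn d (i+1) : ℕ) : ZMod 2) + ((Qn d i : ℕ) : ZMod 2)))
        + ∑ i ∈ Finset.Ico ia ib,
            ((((el d (i+1)).length : ℕ) : ZMod 2) + (((el d i).length : ℕ) : ZMod 2)) := by
    rw [← Finset.sum_add_distrib]
    apply Finset.sum_congr rfl
    intros; ring
  rw [split, telescope_add (fun i => ((Qn d i : ℕ) : ZMod 2)) hab.le,
      telescope_add (fun i => (((el d i).length : ℕ) : ZMod 2)) hab.le]
  have hodd : (Qn d ib + Qn d ia + (el d ib).length + (el d ia).length) % 2 = 1 := by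
    have := endpoint_parity hab hb hlen hint
    unfold Qn; omega
  have hcast := cast_of_odd hodd
  push_cast at hcast ⊢
  linear_combination hcast


/-- A proper interval `[a,b]` with `l(a) = l(b)` contains an odd
number of flat steps. -/
theorem stmt6 (d : ℕ) (a b : List ℕ) (hab : a ≠ b)
    (hp : ProperInterval d a b) (hl : a.length = b.length) :
    Odd (flatSteps d a b).ncard := by
  obtain ⟨haT, hbT, hle, hproper⟩ := hp
  have hltab : lexLt a b := hle.resolve_left hab
  obtain ⟨ia, hiaL, hea⟩ := mem_el haT
  obtain ⟨ib, hibL, heb⟩ := mem_el hbT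
  have hab' : ia < ib := lt_of_el_lt hiaL hibL (by rw [hea, heb]; exact hltab)
  have hint : ∀ i, ia < i → i < ib → (el d i).length ≠ (el d ia).length := by
    intro i h1 h2 hcon
    have hiL : i < (Tl d).length := lt_trans h2 hibL
    have hne_a : el d i ≠ a := by
      intro h
      rw [← hea] at h
      exact absurd (el_inj hiL hiaL h) (by omega)
    have hne_b : el d i ≠ b := by
      intro h
      rw [← heb] at h
      exact absurd (el_inj hiL hibL h) (by omega)
    have hmem : el d i ∈ interval d a b := by
      refine ⟨el_mem hiL, ?_, ?_⟩
      · rw [← hea]; exact el_le (le_of_lt h1) hiL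
      · rw [← heb]; exact el_le (le_of_lt h2) hibL
    exact (hproper _ hmem hne_a hne_b).1 (by rw [← hea]; exact hcon)
  have hlen' : (el d ia).length = (el d ib).length := by rw [hea, heb]; exact hl
  have hset : flatSteps d a b = (((Finset.Ico ia ib).filter
      (fun i => (el d (i+1)).length = (el d i).length)).image (el d) : Finset (List ℕ)) := by
    ext c
    simp only [flatSteps, Set.mem_setOf_eq, Finset.coe_image, Set.mem_image,
      Finset.mem_coe, Finset.mem_filter, Finset.mem_Ico]
    constructor
    · rintro ⟨hcT, hac, hcb, v, hsv, hlv⟩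
      obtain ⟨i, hiL, rfl⟩ := mem_el hcT
      have hia : ia ≤ i := by
        rcases hac with h | h
        · rw [← hea] at h; exact le_of_eq (el_inj hiaL hiL h)
        · exact le_of_lt (lt_of_el_lt hiaL hiL (by rw [hea]; exact h))
      have hib : i < ib := lt_of_el_lt hiL hibL (by rw [heb]; exact hcb)
      have hsucc : i + 1 < (Tl d).length := by omega
      have hv : v = el d (i+1) := isSucc_unique hsv (isSucc_el hsucc)
      exact ⟨i, ⟨⟨hia, hib⟩, by rw [← hv, hlv]⟩, rfl⟩
    · rintro ⟨i, ⟨⟨hia, hib⟩, hflat⟩, rfl⟩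
      have hiL : i < (Tl d).length := lt_trans hib hibL
      have hsucc : i + 1 < (Tl d).length := by omega
      refine ⟨el_mem hiL, by rw [← hea]; exact el_le hia hiL,
        by rw [← heb]; exact el_lt hib hibL, el d (i+1), isSucc_el hsucc, hflat⟩
  rw [hset, Set.ncard_coe_finset]
  rw [Finset.card_image_of_injOn (fun i hi j hj h => by
    simp only [Finset.coe_filter, Set.mem_setOf_eq, Finset.mem_Ico] at hi hj
    exact el_inj (by omega) (by omega) h)]
  exact flat_count hab' hibL hlen' hint
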